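/- Let T be an observation table, (≡,f) a merging map on T, M its resulting transducer, and (u,a) an open end of (≡,f). Then M has no transition out of the state q_u reading a, and for every u'∈dom(f) and every w∈Γ*, adding the transition q_u→^{a|w}q_{u'} to M yields a transducer M' that is compatible with T. -/

import Mathlib

attribute [local instance] Classical.propDecidable

/-- A subsequential string transducer with input alphabet `σ` and output alphabet `γ`. -/
structure Transducer (σ : Type) (γ : Type) : Type 1 where
  Q : Type
  fin : Finite Q
  q0 : Q
  w0 : List γ
  δ : Q → σ → Option (Q × List γ)
  δF : Q → Option (List γ)

namespace Transducer

variable {σ γ : Type}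

/-- The run relation `q →*^{u|w} q'`, as a function: from state `q`, reading `u`,
we reach the returned state producing the returned (concatenated) output. -/
def runFrom (M : Transducer σ γ) : M.Q → List σ → Option (M.Q × List γ)
  | q, [] => some (q, [])
  | q, a :: u =>
    (M.δ q a).bind fun x =>
      (M.runFrom x.1 u).map fun y => (y.1, x.2 ++ y.2)

/-- The semantics `⟦M⟧` of a transducer, as a partial function `Σ* → Γ*`. -/
def sem (M : Transducer σ γ) (u : List σ) : Option (List γ) :=
  (M.runFrom M.q0 u).bind fun x => (M.δF x.1).map fun w' => M.w0 ++ x.2 ++ w'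

/-- The number of states `|M|` of a transducer. -/
noncomputable def size (M : Transducer σ γ) : ℕ := Nat.card M.Q

/-- The run of `v` in `M` (from the initial state) uses the transition out of
state `q` reading letter `a`. -/
def usesTransition (M : Transducer σ γ) (q : M.Q) (a : σ) (v : List σ) : Prop :=
  ∃ (vp vs : List σ) (w : List γ), v = vp ++ a :: vs ∧ M.runFrom M.q0 vp = some (q, w)

/-- Modify the transition function of `M` at `(q, a)`: replace it by `o`
(`o = none` deletes the transition, `o = some (q', w)` makes it `q →^{a|w} q'`). -/
noncomputable def modifyDelta (M : Transducer σ γ) (q : M.Q) (a : σ)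
    (o : Option (M.Q × List γ)) : Transducer σ γ :=
  { M with δ := fun p b => if p = q ∧ b = a then o else M.δ p b }

/-- The product transducer `M × A` of a transducer and a DFA. -/
noncomputable def prodDFA {Q : Type} [Finite Q] (M : Transducer σ γ) (A : DFA σ Q) :
    Transducer σ γ where
  Q := M.Q × Q
  fin := by have := M.fin; infer_instance
  q0 := (M.q0, A.start)
  w0 := M.w0
  δ := fun qp a => (M.δ qp.1 a).map fun x => ((x.1, A.step qp.2 a), x.2)
  δF := fun qp => if qp.2 ∈ A.accept then M.δF qp.1 else none

end Transducer

/-- A table entry: a word of `Γ*`, the wildcard `#`, or `⊥`. -/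
inductive TVal (γ : Type) : Type where
  | word : List γ → TVal γ
  | hash : TVal γ
  | bot  : TVal γ

/-- An observation table for a target partial function `τ` with regular domain
upper bound `Up`, based on a finite prefix-closed set `P` and a finite
suffix-closed set `S` (both containing `ε`). -/
structure ObsTable (σ γ : Type) where
  P : Finset (List σ)
  S : Finset (List σ)
  eps_mem_P : ([] : List σ) ∈ P
  eps_mem_S : ([] : List σ) ∈ S
  prefixClosed : ∀ u ∈ P, ∀ v : List σ, v <+: u → v ∈ P
  suffixClosed : ∀ u ∈ S, ∀ v : List σ, v <:+ u → v ∈ S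
  Up : Language σ
  regular : ∃ (n : ℕ) (A : DFA σ (Fin n)), A.accepts = Up
  τ : List σ → Option (List γ)
  dom_subset : ∀ u : List σ, (τ u).isSome → u ∈ Up

namespace ObsTable

variable {σ γ : Type}

/-- The set `P ∪ PΣ`. -/
def rowIdx (T : ObsTable σ γ) : Set (List σ) :=
  ↑T.P ∪ {x | ∃ p ∈ T.P, ∃ a : σ, x = p ++ [a]}

/-- The set `(P ∪ PΣ)·S` on which the table is defined. -/
def rows (T : ObsTable σ γ) : Set (List σ) :=
  {x | ∃ u ∈ T.rowIdx, ∃ v ∈ T.S, x = u ++ v}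

/-- The table entry at `x`: `#` if `x ∉ Up`, `⊥` if `x ∈ Up ∖ dom τ`, and `τ x` otherwise. -/
noncomputable def val (T : ObsTable σ γ) (x : List σ) : TVal γ :=
  if x ∈ T.Up then
    match T.τ x with
    | some w => TVal.word w
    | none => TVal.bot
  else TVal.hash

/-- `P_T`: the set of prefixes of elements of `(P ∪ PΣ)·S`. -/
def PT (T : ObsTable σ γ) : Set (List σ) := {u | ∃ x ∈ T.rows, u <+: x}

/-- `P_Γ`: those `u ∈ P_T` having an extension whose table entry is a word of `Γ*`. -/
def PGamma (T : ObsTable σ γ) : Set (List σ) :=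
  {u | u ∈ T.PT ∧ ∃ v : List σ, u ++ v ∈ T.rows ∧ ∃ w, T.val (u ++ v) = TVal.word w}

/-- A transducer `M` is compatible with the table `T`. -/
def Compatible (T : ObsTable σ γ) (M : Transducer σ γ) : Prop :=
  ∀ x ∈ T.rows,
    (∀ w, T.val x = TVal.word w → M.sem x = some w) ∧
    (T.val x = TVal.bot → M.sem x = none)

lemma rowIdx_finite [Finite σ] (T : ObsTable σ γ) : T.rowIdx.Finite := by
  refine Set.Finite.union T.P.finite_toSet ?_
  have h : {x : List σ | ∃ p ∈ T.P, ∃ a : σ, x = p ++ [a]}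
      ⊆ (fun pa : List σ × σ => pa.1 ++ [pa.2]) '' ((↑T.P : Set (List σ)) ×ˢ (Set.univ : Set σ)) := by
    rintro x ⟨p, hp, a, rfl⟩
    exact ⟨(p, a), ⟨hp, trivial⟩, rfl⟩
  exact ((T.P.finite_toSet.prod Set.finite_univ).image _).subset h

lemma rows_finite [Finite σ] (T : ObsTable σ γ) : T.rows.Finite := by
  have h : T.rows ⊆ (fun uv : List σ × List σ => uv.1 ++ uv.2) '' (T.rowIdx ×ˢ (↑T.S : Set (List σ))) := by
    rintro x ⟨u, hu, v, hv, rfl⟩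
    exact ⟨(u, v), ⟨hu, hv⟩, rfl⟩
  exact (((rowIdx_finite T).prod T.S.finite_toSet).image _).subset h

lemma PT_finite [Finite σ] (T : ObsTable σ γ) : T.PT.Finite := by
  have h : T.PT ⊆ ⋃ x ∈ T.rows, {u : List σ | u ∈ x.inits} := by
    rintro u ⟨x, hx, hpre⟩
    exact Set.mem_biUnion hx (by simpa [List.mem_inits] using hpre)
  refine (Set.Finite.biUnion (rows_finite T) fun x _ => ?_).subset h
  exact x.inits.finite_toSet

end ObsTable

/-- A merging map `(≡, f)` on an observation table `T`. -/
structure MergingMap {σ γ : Type} (T : ObsTable σ γ) where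
  rel : List σ → List σ → Prop
  f : List σ → Option (List γ)
  rel_mem : ∀ u v : List σ, rel u v → u ∈ T.PT ∧ v ∈ T.PT
  rel_refl : ∀ u ∈ T.PT, rel u u
  rel_symm : ∀ {u v : List σ}, rel u v → rel v u
  rel_trans : ∀ {u v w : List σ}, rel u v → rel v w → rel u w
  f_mem : ∀ u : List σ, (f u).isSome → u ∈ T.PT
  cond1 : ∀ u v : List σ, f u = none → rel u v → f v = none
  cond2 : ∀ (u v : List σ) (w : List γ), u ∈ T.PT → u ++ v ∈ T.rows →
    T.val (u ++ v) = TVal.word w → ∃ x, f u = some x ∧ x <+: w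
  cond3 : ∀ (u : List σ) (a : σ) (w : List γ), f (u ++ [a]) = some w →
    ∃ x, f u = some x ∧ x <+: w
  cond4 : ∀ (u u' : List σ) (a : σ) (wu : List γ), f u = some wu → rel u u' →
    u ++ [a] ∈ T.PT → u' ++ [a] ∈ T.PT →
    rel (u ++ [a]) (u' ++ [a]) ∧
    ∀ wua, f (u ++ [a]) = some wua →
      ∃ (wu' x : List γ), f u' = some wu' ∧ wua = wu ++ x ∧ f (u' ++ [a]) = some (wu' ++ x)
  cond5 : ∀ (u u' : List σ) (w : List γ), u ∈ T.rows → T.val u = TVal.word w → rel u u' →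
    (u' ∈ T.rows → T.val u' ≠ TVal.bot) ∧
    ∀ w', u' ∈ T.rows → T.val u' = TVal.word w' →
      ∃ (x fu fu' : List γ), f u = some fu ∧ f u' = some fu' ∧ w = fu ++ x ∧ w' = fu' ++ x
  cond6 : ∀ (u : List σ) (a : σ), (f (u ++ [a])).isSome →
    (¬ ∃ v, rel u v ∧ v ++ [a] ∈ T.PGamma) → f (u ++ [a]) = f u

namespace MergingMap

variable {σ γ : Type} {T : ObsTable σ γ}

/-- The `≡`-class of `u`. -/
def cls (m : MergingMap T) (u : List σ) : Set (List σ) := {v | m.rel u v}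

/-- The set of `≡`-classes meeting `dom f`. -/
def classes (m : MergingMap T) : Set (Set (List σ)) :=
  {C | ∃ u : List σ, (m.f u).isSome ∧ C = m.cls u}

/-- The size of a merging map: the number of `≡`-classes meeting `dom f`. -/
noncomputable def size (m : MergingMap T) : ℕ := m.classes.ncard

lemma cls_mem_classes (m : MergingMap T) {u : List σ} (h : (m.f u).isSome) :
    m.cls u ∈ m.classes := ⟨u, h, rfl⟩

lemma classes_finite [Finite σ] (m : MergingMap T) : m.classes.Finite := by
  have h : m.classes ⊆ m.cls '' T.PT := by
    rintro C ⟨u, hu, rfl⟩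
    exact ⟨u, m.f_mem u hu, rfl⟩
  exact ((T.PT_finite).image _).subset h

/-- A muted pair `(u, a)` of a merging map. -/
def Muted (m : MergingMap T) (u : List σ) (a : σ) : Prop :=
  (m.f u).isSome ∧ (m.f (u ++ [a])).isSome ∧
    ¬ ∃ v, m.rel u v ∧ v ++ [a] ∈ T.PGamma

/-- An open end `(u, a)` of a merging map. -/
def OpenEnd (m : MergingMap T) (u : List σ) (a : σ) : Prop :=
  u ∈ T.PT ∧ ¬ ∃ v, m.rel u v ∧ v ++ [a] ∈ T.PT

/-- The transducer resulting from a merging map (assuming `f ε` is defined,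
so that the initial state exists). -/
noncomputable def resulting [Finite σ] (m : MergingMap T) (h0 : (m.f []).isSome) :
    Transducer σ γ where
  Q := {C : Set (List σ) // C ∈ m.classes}
  fin := m.classes_finite.to_subtype
  q0 := ⟨m.cls [], m.cls_mem_classes h0⟩
  w0 := (m.f []).get h0
  δ := fun q a =>
    if h : ∃ u : List σ, (m.f u).isSome ∧ (m.f (u ++ [a])).isSome ∧ q.1 = m.cls u then
      some (⟨m.cls (h.choose ++ [a]), m.cls_mem_classes h.choose_spec.2.1⟩,
        ((m.f (h.choose ++ [a])).get h.choose_spec.2.1).drop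
          ((m.f h.choose).get h.choose_spec.1).length)
    else none
  δF := fun q =>
    if h : ∃ u : List σ, (m.f u).isSome ∧ q.1 = m.cls u ∧ u ∈ T.rows ∧
        ∃ w, T.val u = TVal.word w then
      some (h.choose_spec.2.2.2.choose.drop ((m.f h.choose).get h.choose_spec.1).length)
    else none

/-- The state `q_u` of the resulting transducer associated with `u ∈ dom f`. -/
noncomputable def state [Finite σ] (m : MergingMap T) (h0 : (m.f []).isSome)
    {u : List σ} (h : (m.f u).isSome) : (m.resulting h0).Q :=
  ⟨m.cls u, m.cls_mem_classes h⟩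

/-- An open completion of a merging map, determined by a choice `g` of added
transitions (which, when used, must only be added at open ends, with output `ε`). -/
noncomputable def openCompletion [Finite σ] (m : MergingMap T) (h0 : (m.f []).isSome)
    (g : (m.resulting h0).Q → σ → Option ((m.resulting h0).Q)) : Transducer σ γ :=
  { m.resulting h0 with
    δ := fun q a =>
      match (m.resulting h0).δ q a with
      | some x => some x
      | none => (g q a).map fun q' => (q', ([] : List γ)) }

/-- The choice `g` of added transitions only adds transitions at open ends. -/
def ValidOpenChoice [Finite σ] (m : MergingMap T) (h0 : (m.f []).isSome)
    (g : (m.resulting h0).Q → σ → Option ((m.resulting h0).Q)) : Prop :=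
  ∀ (q : (m.resulting h0).Q) (a : σ), (g q a).isSome →
    ∃ u : List σ, q.1 = m.cls u ∧ m.OpenEnd u a

/-- The run of `x` in the open completion uses a muted or an open transition. -/
def usesMutedOrOpen [Finite σ] (m : MergingMap T) (h0 : (m.f []).isSome)
    (g : (m.resulting h0).Q → σ → Option ((m.resulting h0).Q)) (x : List σ) : Prop :=
  ∃ (vp : List σ) (a : σ) (vs : List σ) (q : (m.resulting h0).Q) (w : List γ),
    x = vp ++ a :: vs ∧
    (m.openCompletion h0 g).runFrom (m.openCompletion h0 g).q0 vp = some (q, w) ∧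
    ((∃ u, q.1 = m.cls u ∧ m.Muted u a) ∨ (m.resulting h0).δ q a = none)

end MergingMap

/-- The equivalence on `P_T` induced by a transducer: two words are related when
they reach the same state of `M` (or both fail to have a run). -/
def inducedRel {σ γ : Type} (M : Transducer σ γ) (T : ObsTable σ γ) (u v : List σ) : Prop :=
  u ∈ T.PT ∧ v ∈ T.PT ∧
    (M.runFrom M.q0 u).map Prod.fst = (M.runFrom M.q0 v).map Prod.fst

/-- Helper for the induced partial output function: walk through the word,
appending the transition output only when the step leads into `P_Γ` for
some equivalent word. -/
noncomputable def goF {σ γ : Type} (M : Transducer σ γ) (T : ObsTable σ γ) :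
    M.Q → List γ → List σ → Option (List γ)
  | _, acc, [] => some acc
  | q, acc, a :: rest =>
    (M.δ q a).bind fun x =>
      goF M T x.1
        (if ∃ v ∈ T.PT, (M.runFrom M.q0 v).map Prod.fst = some q ∧ v ++ [a] ∈ T.PGamma
          then acc ++ x.2 else acc) rest

/-- The partial output function induced by a transducer on `P_T`. -/
noncomputable def inducedF {σ γ : Type} (M : Transducer σ γ) (T : ObsTable σ γ)
    (u : List σ) : Option (List γ) :=
  if u ∈ T.PT then goF M T M.q0 M.w0 u else none

section AuxLemmas

open MergingMap ObsTable

variable {σ γ : Type} [Finite σ] [Finite γ] {T : ObsTable σ γ}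

lemma PT_prefix_closed {u v : List σ} (hu : u ∈ T.PT) (hv : v <+: u) : v ∈ T.PT := by
  obtain ⟨x, hx, hux⟩ := hu; exact ⟨x, hx, hv.trans hux⟩

lemma rows_subset_PT {x : List σ} (hx : x ∈ T.rows) : x ∈ T.PT :=
  ⟨x, hx, List.prefix_refl x⟩

namespace MergingMap

lemma rel_of_cls_eq (m : MergingMap T) {u v : List σ} (hv : v ∈ T.PT)
    (h : m.cls u = m.cls v) : m.rel u v := by
  have : v ∈ m.cls v := m.rel_refl v hv
  rw [← h] at this; exact this

lemma cls_eq_of_rel (m : MergingMap T) {u v : List σ} (h : m.rel u v) :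
    m.cls u = m.cls v := by
  ext z
  exact ⟨fun hz => m.rel_trans (m.rel_symm h) hz, fun hz => m.rel_trans h hz⟩

lemma f_step (m : MergingMap T) {p : List σ} {a : σ} (h : (m.f (p ++ [a])).isSome) :
    ∃ hp : (m.f p).isSome, ((m.f p).get hp) <+: ((m.f (p ++ [a])).get h) := by
  obtain ⟨w, hw⟩ := Option.isSome_iff_exists.mp h
  obtain ⟨x, hx, hpre⟩ := m.cond3 p a w hw
  have hp : (m.f p).isSome := by simp [hx]
  refine ⟨hp, ?_⟩
  simp only [hx, hw, Option.get_some]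
  exact hpre

lemma eps_f_prefix (m : MergingMap T) (h0 : (m.f []).isSome) (p : List σ) :
    ∀ hp : (m.f p).isSome, ((m.f []).get h0) <+: ((m.f p).get hp) := by
  induction p using List.reverseRecOn with
  | nil => intro hp; exact List.prefix_refl _
  | append_singleton p a ih =>
    intro hpa
    obtain ⟨hp, hpre⟩ := m.f_step hpa
    exact (ih hp).trans hpre

lemma drop_tower {l0 lp lpa : List γ} (h1 : l0 <+: lp) (h2 : lp <+: lpa) :
    lp.drop l0.length ++ lpa.drop lp.length = lpa.drop l0.length := by
  obtain ⟨x, rfl⟩ := h2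
  obtain ⟨y, rfl⟩ := h1
  rw [List.drop_left, List.drop_left, List.append_assoc, List.drop_left]

lemma prefix_glue {l0 fx wx : List γ} (h1 : l0 <+: fx) (h2 : fx <+: wx) :
    l0 ++ fx.drop l0.length ++ wx.drop fx.length = wx := by
  obtain ⟨z, rfl⟩ := h2
  obtain ⟨y, rfl⟩ := h1
  rw [List.drop_left, List.drop_left, List.append_assoc]

lemma _root_.Transducer.runFrom_append (M : Transducer σ γ) (q : M.Q) (u v : List σ) :
    M.runFrom q (u ++ v) = (M.runFrom q u).bind fun x =>
      (M.runFrom x.1 v).map fun y => (y.1, x.2 ++ y.2) := by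
  induction u generalizing q with
  | nil =>
    simp [Transducer.runFrom]
  | cons a u ih =>
    simp only [List.cons_append, Transducer.runFrom, List.append_eq]
    cases M.δ q a with
    | none => rfl
    | some x =>
      simp only [Option.bind_some, ih]
      cases M.runFrom x.1 u with
      | none => rfl
      | some y =>
        simp only [Option.bind_some, Option.map_some, Option.map_bind]
        cases M.runFrom y.1 v with
        | none => rfl
        | some z => simp [List.append_assoc]

lemma delta_spec (m : MergingMap T) (h0 : (m.f []).isSome) {p : List σ}
    (hp : (m.f p).isSome) {a : σ} (hpa : (m.f (p ++ [a])).isSome) :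
    (m.resulting h0).δ (m.state h0 hp) a =
      some (m.state h0 hpa,
        ((m.f (p ++ [a])).get hpa).drop (((m.f p).get hp).length)) := by
  simp only [MergingMap.resulting, MergingMap.state]
  split
  · rename_i h
    obtain ⟨hv1, hv2, hv3⟩ := h.choose_spec
    set v := h.choose with hvdef
    have hvPT : v ∈ T.PT := m.f_mem v hv1
    have hrel : m.rel p v := m.rel_of_cls_eq hvPT hv3
    obtain ⟨wp, hwp⟩ := Option.isSome_iff_exists.mp hp
    obtain ⟨wpa, hwpa⟩ := Option.isSome_iff_exists.mp hpa
    have h4 := m.cond4 p v a wp hwp hrel (m.f_mem _ hpa) (m.f_mem _ hv2)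
    obtain ⟨wv, x, hwv, hxeq, hwva⟩ := h4.2 wpa hwpa
    have hcls : m.cls (v ++ [a]) = m.cls (p ++ [a]) :=
      m.cls_eq_of_rel (m.rel_symm h4.1)
    refine congrArg some (Prod.ext (Subtype.ext hcls) ?_)
    rw [hvdef] at hwva hwv
    simp only [hwva, hwv, hwpa, hwp, Option.get_some, hxeq, List.drop_left]
  · rename_i h
    exact absurd ⟨p, hp, hpa, rfl⟩ h

lemma delta_none (m : MergingMap T) (h0 : (m.f []).isSome) {p : List σ}
    (hp : (m.f p).isSome) {a : σ}
    (hn : ¬ ∃ v, m.rel p v ∧ (m.f (v ++ [a])).isSome) :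
    (m.resulting h0).δ (m.state h0 hp) a = none := by
  simp only [MergingMap.resulting, MergingMap.state]
  split
  · rename_i h
    obtain ⟨hv1, hv2, hv3⟩ := h.choose_spec
    exact absurd ⟨h.choose, m.rel_of_cls_eq (m.f_mem _ hv1) hv3, hv2⟩ hn
  · rfl

lemma run_some (m : MergingMap T) (h0 : (m.f []).isSome) (p : List σ) :
    ∀ hp : (m.f p).isSome,
      (m.resulting h0).runFrom (m.resulting h0).q0 p =
        some (m.state h0 hp, ((m.f p).get hp).drop (((m.f []).get h0).length)) := by
  induction p using List.reverseRecOn with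
  | nil =>
    intro hp
    have hd : List.drop ((m.f []).get h0).length ((m.f []).get hp) = [] :=
      List.drop_length
    simp only [Transducer.runFrom, hd]
    rfl
  | append_singleton p a ih =>
    intro hpa
    obtain ⟨hp, hpre⟩ := m.f_step hpa
    have hstep : (m.resulting h0).runFrom (m.state h0 hp) [a] =
        some (m.state h0 hpa,
          ((m.f (p ++ [a])).get hpa).drop (((m.f p).get hp).length)) := by
      simp only [Transducer.runFrom, m.delta_spec h0 hp hpa, Option.bind_some,
        Option.map_some, List.append_nil]
    rw [Transducer.runFrom_append, ih hp, Option.bind_some, hstep, Option.map_some]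
    refine congrArg some (Prod.ext rfl ?_)
    exact drop_tower (m.eps_f_prefix h0 p hp) hpre

lemma run_inv (m : MergingMap T) (h0 : (m.f []).isSome) (p : List σ) :
    p ∈ T.PT → ∀ r, (m.resulting h0).runFrom (m.resulting h0).q0 p = some r →
      (m.f p).isSome := by
  induction p using List.reverseRecOn with
  | nil => intro _ _ _; exact h0
  | append_singleton p a ih =>
    intro hPT r hr
    have hpPT : p ∈ T.PT := PT_prefix_closed hPT ⟨[a], rfl⟩
    rw [Transducer.runFrom_append] at hr
    cases hrp : (m.resulting h0).runFrom (m.resulting h0).q0 p with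
    | none => rw [hrp] at hr; exact absurd hr (by simp)
    | some r' =>
      have hp : (m.f p).isSome := ih hpPT r' hrp
      rw [m.run_some h0 p hp] at hrp hr
      by_cases hex : ∃ v, m.rel p v ∧ (m.f (v ++ [a])).isSome
      · obtain ⟨v, hrel, hva⟩ := hex
        obtain ⟨hv, _⟩ := m.f_step hva
        obtain ⟨wv, hwv⟩ := Option.isSome_iff_exists.mp hv
        obtain ⟨wva, hwva⟩ := Option.isSome_iff_exists.mp hva
        have h4 := m.cond4 v p a wv hwv (m.rel_symm hrel) (m.f_mem _ hva) hPT
        obtain ⟨wp, x, _, _, hfpa⟩ := h4.2 wva hwva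
        simp [hfpa]
      · simp [Transducer.runFrom, m.delta_none h0 hp hex] at hr

lemma deltaF_spec (m : MergingMap T) (h0 : (m.f []).isSome) {x : List σ}
    (hx : (m.f x).isSome) (hxr : x ∈ T.rows) {wx : List γ}
    (hval : T.val x = TVal.word wx) :
    (m.resulting h0).δF (m.state h0 hx) = some (wx.drop (((m.f x).get hx).length)) := by
  simp only [MergingMap.resulting, MergingMap.state]
  split
  · rename_i h
    obtain ⟨hv1, hv2, hv3, hv4⟩ := h.choose_spec
    set v := h.choose with hvdef
    have hwv : T.val v = TVal.word hv4.choose := hv4.choose_spec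
    have hrel : m.rel x v := m.rel_of_cls_eq (m.f_mem v hv1) hv2
    obtain ⟨z, fx, fv, hfx, hfv, hwxz, hwvz⟩ :=
      (m.cond5 x v wx hxr hval hrel).2 hv4.choose hv3 hwv
    refine congrArg some ?_
    rw [hwvz, hwxz]
    rw [hvdef] at hfv
    simp only [hfv, hfx, Option.get_some, List.drop_left]
  · rename_i h
    exact absurd ⟨x, hx, rfl, hxr, wx, hval⟩ h

lemma deltaF_some_imp (m : MergingMap T) (h0 : (m.f []).isSome)
    {q : (m.resulting h0).Q} {w' : List γ} (h : (m.resulting h0).δF q = some w') :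
    ∃ v wv, (m.f v).isSome ∧ q.1 = m.cls v ∧ v ∈ T.rows ∧ T.val v = TVal.word wv := by
  simp only [MergingMap.resulting] at h
  split at h
  · rename_i hh
    obtain ⟨hv1, hv2, hv3, hv4⟩ := hh.choose_spec
    exact ⟨hh.choose, hv4.choose, hv1, hv2, hv3, hv4.choose_spec⟩
  · exact absurd h (by simp)

lemma sem_word (m : MergingMap T) (h0 : (m.f []).isSome) {x : List σ} {wx : List γ}
    (hxr : x ∈ T.rows) (hval : T.val x = TVal.word wx) :
    (m.resulting h0).sem x = some wx := by
  have hxPT : x ∈ T.PT := rows_subset_PT hxr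
  obtain ⟨fx, hfx, hfxpre⟩ := m.cond2 x [] wx hxPT (by simpa using hxr) (by simpa using hval)
  have hx : (m.f x).isSome := by simp [hfx]
  unfold Transducer.sem
  rw [m.run_some h0 x hx, Option.bind_some]
  rw [show (m.state h0 hx, ((m.f x).get hx).drop (((m.f []).get h0).length)).1
      = m.state h0 hx from rfl]
  rw [m.deltaF_spec h0 hx hxr hval, Option.map_some]
  refine congrArg some ?_
  have hw0 : (m.resulting h0).w0 = (m.f []).get h0 := rfl
  rw [hw0]
  have h1 : ((m.f []).get h0) <+: ((m.f x).get hx) := m.eps_f_prefix h0 x hx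
  have h2 : ((m.f x).get hx) <+: wx := by simpa only [hfx, Option.get_some] using hfxpre
  exact prefix_glue h1 h2

lemma sem_bot (m : MergingMap T) (h0 : (m.f []).isSome) {x : List σ}
    (hxr : x ∈ T.rows) (hval : T.val x = TVal.bot) :
    (m.resulting h0).sem x = none := by
  have hxPT : x ∈ T.PT := rows_subset_PT hxr
  unfold Transducer.sem
  cases hrun : (m.resulting h0).runFrom (m.resulting h0).q0 x with
  | none => rfl
  | some r =>
    have hx : (m.f x).isSome := m.run_inv h0 x hxPT r hrun
    rw [m.run_some h0 x hx] at hrun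
    obtain rfl := Option.some.inj hrun
    simp only [Option.bind_some]
    cases hdF : (m.resulting h0).δF (m.state h0 hx) with
    | none => rfl
    | some w' =>
      obtain ⟨v, wv, hv1, hv2, hv3, hv4⟩ := m.deltaF_some_imp h0 hdF
      have hrel : m.rel x v := m.rel_of_cls_eq (m.f_mem v hv1) hv2
      exact absurd hval ((m.cond5 v x wv hv3 hv4 (m.rel_symm hrel)).1 hxr)

lemma modify_run_eq (m : MergingMap T) (h0 : (m.f []).isSome) {u : List σ} {a : σ}
    (ho : m.OpenEnd u a) (hu : (m.f u).isSome)
    (q' : (m.resulting h0).Q) (w : List γ) (x : List σ) :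
    x ∈ T.PT →
      ((m.resulting h0).modifyDelta (m.state h0 hu) a (some (q', w))).runFrom
        ((m.resulting h0).modifyDelta (m.state h0 hu) a (some (q', w))).q0 x =
      (m.resulting h0).runFrom (m.resulting h0).q0 x := by
  induction x using List.reverseRecOn with
  | nil => intro _; rfl
  | append_singleton p b ih =>
    intro hPT
    have hpPT : p ∈ T.PT := PT_prefix_closed hPT ⟨[b], rfl⟩
    rw [Transducer.runFrom_append, Transducer.runFrom_append, ih hpPT]
    have hq0 : ((m.resulting h0).modifyDelta (m.state h0 hu) a (some (q', w))).q0
        = (m.resulting h0).q0 := rfl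
    cases hrp : (m.resulting h0).runFrom (m.resulting h0).q0 p with
    | none => rfl
    | some r =>
      have hp : (m.f p).isSome := m.run_inv h0 p hpPT r hrp
      rw [m.run_some h0 p hp] at hrp
      obtain rfl := Option.some.inj hrp
      simp only [Option.bind_some]
      have hδ : ((m.resulting h0).modifyDelta (m.state h0 hu) a
          (some (q', w))).δ (m.state h0 hp) b = (m.resulting h0).δ (m.state h0 hp) b := by
        simp only [Transducer.modifyDelta]
        rw [if_neg]
        rintro ⟨hq, rfl⟩
        have hcls : m.cls p = m.cls u := congrArg Subtype.val hq
        exact ho.2 ⟨p, m.rel_of_cls_eq hpPT hcls.symm, hPT⟩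
      simp only [Transducer.runFrom, hδ]
      change Option.map (fun y => (y.1, List.drop ((m.f []).get h0).length ((m.f p).get hp) ++ y.2))
        ((((m.resulting h0).modifyDelta (m.state h0 hu) a (some (q', w))).δ (m.state h0 hp) b).bind
          fun x => Option.map (fun y => (y.1, x.2 ++ y.2)) (some (x.1, []))) = _
      rw [hδ]
      rfl
  
end MergingMap

end AuxLemmas

/-- At an open end `(u, a)`, the resulting transducer has no
transition out of `q_u` reading `a`, and adding any transition
`q_u →^{a|w} q_{u'}` (for `u' ∈ dom f`, `w ∈ Γ*`) yields a transducer
compatible with `T`. -/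
theorem openEnd_add_compatible {σ γ : Type} [Finite σ] [Finite γ]
    (T : ObsTable σ γ) (m : MergingMap T) (h0 : (m.f []).isSome)
    (u : List σ) (a : σ) (ho : m.OpenEnd u a) (hu : (m.f u).isSome) :
    (m.resulting h0).δ (m.state h0 hu) a = none ∧
    ∀ (u' : List σ) (hu' : (m.f u').isSome = true) (w : List γ),
      T.Compatible ((m.resulting h0).modifyDelta (m.state h0 hu) a
        (some (m.state h0 hu', w))) := by
  constructor
  · refine m.delta_none h0 hu ?_
    rintro ⟨v, hrel, hva⟩
    exact ho.2 ⟨v, hrel, m.f_mem _ hva⟩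
  · intro u' hu' w x hx
    have hsem : ((m.resulting h0).modifyDelta (m.state h0 hu) a
        (some (m.state h0 hu', w))).sem x = (m.resulting h0).sem x := by
      unfold Transducer.sem
      rw [m.modify_run_eq h0 ho hu _ w x (rows_subset_PT hx)]
      rfl
    refine ⟨fun w0 hval => ?_, fun hval => ?_⟩
    · rw [hsem]; exact m.sem_word h0 hx hval
    · rw [hsem]; exact m.sem_bot h0 hx hval
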